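/- For every x ∈ ℝ, the cumulative distribution function F(x; θ) = ∫_{−∞}^x f(t; θ) dt of X ~ TD(θ) satisfies, with u = (x−μ)/σ: F(x; θ) = (ρσ/Z_θ)·G(u) + (δσ/Z_θ)·{ E[G(−α√Y)] + T(u; α, p)·G(u) } − (δσ/Z_θ)·{ E[𝟙{Y ≤ (u/α)²}·G(−α√Y)]·𝟙{x < μ} + E[𝟙{Y ≤ (u/α)²}·G(α√Y)]·𝟙{x ≥ μ} }, where E[𝟙{Y ≤ c}·G(±α√Y)] = ∫₀^c G(±α√y)·y^{p−1}e^{−y}/Γ(p) dy. -/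

import Mathlib

open MeasureTheory Real Set Filter

noncomputable def lincGamma (p u : ℝ) : ℝ := ∫ w in (0:ℝ)..u, w ^ (p - 1) * Real.exp (-w)

noncomputable def Tfun (p α x : ℝ) : ℝ := lincGamma p (x ^ 2 / α ^ 2) / Real.Gamma p

noncomputable def gammaPDF (p y : ℝ) : ℝ := y ^ (p - 1) * Real.exp (-y) / Real.Gamma p

noncomputable def Znorm (p σ α ρ δ : ℝ) (g : ℝ → ℝ) : ℝ :=
  σ * ∫ w : ℝ, (ρ + δ * Tfun p α w) * g w

noncomputable def tdPDF (p μ σ α ρ δ : ℝ) (g : ℝ → ℝ) (x : ℝ) : ℝ :=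
  (1 / Znorm p σ α ρ δ g) * (ρ + δ * Tfun p α ((x - μ) / σ)) * g ((x - μ) / σ)

noncomputable def cdfOf (d : ℝ → ℝ) (x : ℝ) : ℝ := ∫ t in Iic x, d t

lemma gker_integrableOn {p : ℝ} (hp : 0 < p) :
    IntegrableOn (fun y : ℝ => y ^ (p - 1) * Real.exp (-y)) (Ioi 0) :=
  (Real.GammaIntegral_convergent hp).congr_fun (fun x _ => mul_comm _ _) measurableSet_Ioi

lemma lincGamma_eq_setIntegral {p c : ℝ} (hc : 0 ≤ c) :
    lincGamma p c = ∫ y in Ioc 0 c, y ^ (p - 1) * Real.exp (-y) :=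
  intervalIntegral.integral_of_le hc

lemma lincGamma_nonneg {p c : ℝ} (hc : 0 ≤ c) : 0 ≤ lincGamma p c := by
  rw [lincGamma_eq_setIntegral hc]
  refine setIntegral_nonneg measurableSet_Ioc fun y hy => ?_
  exact mul_nonneg (Real.rpow_nonneg hy.1.le _) (Real.exp_nonneg _)

lemma lincGamma_mono {p : ℝ} (hp : 0 < p) {a b : ℝ} (ha : 0 ≤ a) (hab : a ≤ b) :
    lincGamma p a ≤ lincGamma p b := by
  rw [lincGamma_eq_setIntegral ha, lincGamma_eq_setIntegral (ha.trans hab)]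
  refine setIntegral_mono_set ((gker_integrableOn hp).mono_set Ioc_subset_Ioi_self)
    ?_ (HasSubset.Subset.eventuallyLE (Ioc_subset_Ioc_right hab))
  refine (ae_restrict_iff' measurableSet_Ioc).2 (ae_of_all _ fun y hy => ?_)
  exact mul_nonneg (Real.rpow_nonneg hy.1.le _) (Real.exp_nonneg _)

lemma lincGamma_le_Gamma {p : ℝ} (hp : 0 < p) {c : ℝ} (hc : 0 ≤ c) :
    lincGamma p c ≤ Real.Gamma p := by
  have h2 : Real.Gamma p = ∫ y in Ioi 0, y ^ (p - 1) * Real.exp (-y) := by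
    rw [Real.Gamma_eq_integral hp]
    exact setIntegral_congr_fun measurableSet_Ioi fun y _ => mul_comm _ _
  rw [lincGamma_eq_setIntegral hc, h2]
  refine setIntegral_mono_set (gker_integrableOn hp) ?_
    (HasSubset.Subset.eventuallyLE Ioc_subset_Ioi_self)
  refine (ae_restrict_iff' measurableSet_Ioi).2 (ae_of_all _ fun y hy => ?_)
  exact mul_nonneg (Real.rpow_nonneg (le_of_lt hy) _) (Real.exp_nonneg _)

lemma Tfun_nonneg {p α : ℝ} (hp : 0 < p) (x : ℝ) : 0 ≤ Tfun p α x := by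
  have h : 0 ≤ x ^ 2 / α ^ 2 := by positivity
  exact div_nonneg (lincGamma_nonneg h) (Real.Gamma_pos_of_pos hp).le

lemma Tfun_le_one {p α : ℝ} (hp : 0 < p) (x : ℝ) : Tfun p α x ≤ 1 := by
  rw [Tfun, div_le_one (Real.Gamma_pos_of_pos hp)]
  exact lincGamma_le_Gamma hp (by positivity)

lemma measurable_Tfun {p α : ℝ} (hp : 0 < p) : Measurable (Tfun p α) := by
  have hmono : Monotone fun c => lincGamma p (max c 0) := fun a b hab =>
    lincGamma_mono hp (le_max_right _ _) (max_le_max hab le_rfl)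
  have h1 : Measurable fun x : ℝ => lincGamma p (max (x ^ 2 / α ^ 2) 0) :=
    hmono.measurable.comp ((measurable_id.pow_const 2).div_const _)
  have h2 : Tfun p α = fun x => lincGamma p (max (x ^ 2 / α ^ 2) 0) / Real.Gamma p := by
    funext x; rw [Tfun, max_eq_left (by positivity)]
  rw [h2]; exact h1.div_const _

lemma measurable_gammaPDF {p : ℝ} : Measurable (gammaPDF p) := by
  unfold gammaPDF; fun_prop

lemma gammaPDF_nonneg {p y : ℝ} (hp : 0 < p) (hy : 0 ≤ y) : 0 ≤ gammaPDF p y :=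
  div_nonneg (mul_nonneg (Real.rpow_nonneg hy _) (Real.exp_nonneg _))
    (Real.Gamma_pos_of_pos hp).le

lemma gammaPDF_integrableOn {p : ℝ} (hp : 0 < p) :
    IntegrableOn (gammaPDF p) (Ioi 0) := (gker_integrableOn hp).div_const _

lemma setIntegral_gammaPDF {p : ℝ} (α x : ℝ) :
    ∫ y in Ioc 0 (x ^ 2 / α ^ 2), gammaPDF p y = Tfun p α x := by
  unfold gammaPDF Tfun
  rw [integral_div, lincGamma_eq_setIntegral (by positivity)]

section cdf
variable {g : ℝ → ℝ}

lemma cdf_mono (hg0 : ∀ x, 0 ≤ g x) (hgi : Integrable g) : Monotone (cdfOf g) := fun a b hab =>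
  setIntegral_mono_set hgi.integrableOn (ae_restrict_of_ae (ae_of_all _ hg0))
    (HasSubset.Subset.eventuallyLE (Iic_subset_Iic.2 hab))

lemma cdf_measurable (hg0 : ∀ x, 0 ≤ g x) (hgi : Integrable g) : Measurable (cdfOf g) := (cdf_mono hg0 hgi).measurable

lemma cdf_nonneg (hg0 : ∀ x, 0 ≤ g x) (t : ℝ) : 0 ≤ cdfOf g t :=
  setIntegral_nonneg measurableSet_Iic fun x _ => hg0 x

lemma cdf_le_one (hg0 : ∀ x, 0 ≤ g x) (hgi : Integrable g) (hg1 : (∫ x : ℝ, g x) = 1) (t : ℝ) : cdfOf g t ≤ 1 := by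
  rw [← hg1]
  exact setIntegral_le_integral hgi (ae_of_all _ hg0)

lemma cdf_diff (hgi : Integrable g) {a b : ℝ} (hab : a ≤ b) :
    ∫ t in Ioc a b, g t = cdfOf g b - cdfOf g a := by
  have h : Iic a ∪ Ioc a b = Iic b := Iic_union_Ioc_eq_Iic hab
  have h2 : cdfOf g b = cdfOf g a + ∫ t in Ioc a b, g t := by
    rw [cdfOf, ← h, setIntegral_union (Iic_disjoint_Ioc le_rfl) measurableSet_Ioc
      hgi.integrableOn hgi.integrableOn]
    rfl
  rw [h2]; ring

lemma inner_set_integral (hgi : Integrable g) {u s : ℝ} (hs : 0 < s) :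
    ∫ w in Iic u ∩ (Iic (-s) ∪ Ici s), g w
      = cdfOf g (min u (-s)) + (if s ≤ u then cdfOf g u - cdfOf g s else 0) := by
  rcases le_or_gt u (-s) with h | h
  · have he : Iic u ∩ (Iic (-s) ∪ Ici s) = Iic u := by
      refine inter_eq_left.2 fun w hw => Or.inl ?_
      exact le_trans hw h
    rw [he, min_eq_left h, if_neg (by intro hsu; linarith), add_zero]
    rfl
  · rcases lt_or_ge u s with h2 | h2
    · have he : Iic u ∩ (Iic (-s) ∪ Ici s) = Iic (-s) := by
        ext w
        simp only [mem_inter_iff, mem_Iic, mem_union, mem_Ici]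
        constructor
        · rintro ⟨hw, hw2 | hw2⟩
          · exact hw2
          · linarith
        · intro hw; exact ⟨by linarith, Or.inl hw⟩
      rw [he, min_eq_right h.le, if_neg (not_le.2 h2), add_zero]
      rfl
    · have he : Iic u ∩ (Iic (-s) ∪ Ici s) = Iic (-s) ∪ Icc s u := by
        ext w
        simp only [mem_inter_iff, mem_Iic, mem_union, mem_Ici, mem_Icc]
        constructor
        · rintro ⟨hw, hw2 | hw2⟩
          · exact Or.inl hw2
          · exact Or.inr ⟨hw2, hw⟩
        · rintro (hw | ⟨hw1, hw2⟩)
          · exact ⟨by linarith, Or.inl hw⟩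
          · exact ⟨hw2, Or.inr hw1⟩
      have hdisj : Disjoint (Iic (-s)) (Icc s u) := by
        rw [Set.disjoint_left]
        rintro w hw ⟨h3, h4⟩
        simp only [mem_Iic] at hw
        linarith
      rw [he, setIntegral_union hdisj measurableSet_Icc
          hgi.integrableOn hgi.integrableOn,
        integral_Icc_eq_integral_Ioc, cdf_diff hgi h2, min_eq_right h.le, if_pos h2]
      rfl

end cdf

lemma sq_set_eq {α y : ℝ} (hα : 0 < α) (hy : 0 < y) :
    {w : ℝ | y ≤ w ^ 2 / α ^ 2} = Iic (-(α * Real.sqrt y)) ∪ Ici (α * Real.sqrt y) := by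
  ext w
  have hs : 0 ≤ α * Real.sqrt y := by positivity
  have h1 : y ≤ w ^ 2 / α ^ 2 ↔ (α * Real.sqrt y) ^ 2 ≤ w ^ 2 := by
    rw [le_div_iff₀ (by positivity), mul_pow, Real.sq_sqrt hy.le]
    constructor <;> intro h <;> nlinarith
  have h2 : (α * Real.sqrt y) ^ 2 ≤ w ^ 2 ↔ α * Real.sqrt y ≤ |w| := by
    rw [← sq_abs w]
    exact pow_le_pow_iff_left₀ hs (abs_nonneg w) two_ne_zero
  simp only [mem_setOf_eq, mem_union, mem_Iic, mem_Ici, h1, h2, le_abs]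
  constructor
  · rintro (h | h)
    · exact Or.inr h
    · exact Or.inl (by linarith)
  · rintro (h | h)
    · exact Or.inr (by linarith)
    · exact Or.inl h

lemma sqrt_le_iff_le_sq {α y v : ℝ} (hα : 0 < α) (hy : 0 < y) (hv : 0 ≤ v) :
    α * Real.sqrt y ≤ v ↔ y ≤ v ^ 2 / α ^ 2 := by
  have hs : 0 ≤ α * Real.sqrt y := by positivity
  rw [← pow_le_pow_iff_left₀ hs hv two_ne_zero, mul_pow, Real.sq_sqrt hy.le,
    le_div_iff₀ (by positivity : (0:ℝ) < α ^ 2)]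
  constructor <;> intro h <;> nlinarith

lemma int_cdf_gamma {p : ℝ} (hp : 0 < p) {g : ℝ → ℝ} (hg0 : ∀ x, 0 ≤ g x)
    (hgi : Integrable g) (hg1 : (∫ x : ℝ, g x) = 1) {φ : ℝ → ℝ} (hφ : Measurable φ) :
    IntegrableOn (fun y => cdfOf g (φ y) * gammaPDF p y) (Ioi 0) := by
  refine Integrable.mono' (gammaPDF_integrableOn hp)
    ((((cdf_measurable hg0 hgi).comp hφ).mul measurable_gammaPDF).aestronglyMeasurable) ?_
  refine (ae_restrict_iff' measurableSet_Ioi).2 (ae_of_all _ fun y hy => ?_)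
  have h1 : 0 ≤ gammaPDF p y := gammaPDF_nonneg hp (le_of_lt hy)
  rw [Real.norm_eq_abs, abs_mul, abs_of_nonneg (cdf_nonneg hg0 _), abs_of_nonneg h1]
  calc cdfOf g (φ y) * gammaPDF p y ≤ 1 * gammaPDF p y := by
        exact mul_le_mul_of_nonneg_right (cdf_le_one hg0 hgi hg1 _) h1
    _ = gammaPDF p y := one_mul _

lemma split_eval {p α : ℝ} (hp : 0 < p) (hα : 0 < α) {g : ℝ → ℝ} (hg0 : ∀ x, 0 ≤ g x)
    (hgm : Measurable g) (hgi : Integrable g) (hg1 : (∫ x : ℝ, g x) = 1)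
    (u : ℝ) (φ : ℝ → ℝ) (hφ : Measurable φ) :
    ∫ y in Ioi (0:ℝ), (cdfOf g (-(α * Real.sqrt y)) * gammaPDF p y
        + (Iic (u ^ 2 / α ^ 2)).indicator
            (fun y => (cdfOf g u - cdfOf g (φ y)) * gammaPDF p y) y)
      = (∫ y in Ioi (0:ℝ), cdfOf g (-(α * Real.sqrt y)) * gammaPDF p y)
        + (cdfOf g u * Tfun p α u
            - ∫ y in Ioc (0:ℝ) (u ^ 2 / α ^ 2), cdfOf g (φ y) * gammaPDF p y) := by
  have hφ1 : Measurable fun y : ℝ => -(α * Real.sqrt y) :=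
    ((Real.continuous_sqrt.measurable).const_mul α).neg
  have h1 : IntegrableOn (fun y => cdfOf g (-(α * Real.sqrt y)) * gammaPDF p y) (Ioi 0) :=
    int_cdf_gamma hp hg0 hgi hg1 hφ1
  have hφi : IntegrableOn (fun y => cdfOf g (φ y) * gammaPDF p y) (Ioi 0) :=
    int_cdf_gamma hp hg0 hgi hg1 hφ
  have hFc : IntegrableOn (fun y => (cdfOf g u - cdfOf g (φ y)) * gammaPDF p y) (Ioi 0) := by
    refine (((gammaPDF_integrableOn hp).const_mul (cdfOf g u)).sub hφi).congr ?_
    exact ae_of_all _ fun y => by simp only [Pi.sub_apply]; ring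
  have h2 : Integrable ((Iic (u ^ 2 / α ^ 2)).indicator
      (fun y => (cdfOf g u - cdfOf g (φ y)) * gammaPDF p y)) (volume.restrict (Ioi 0)) :=
    (integrable_indicator_iff measurableSet_Iic).2 hFc.integrableOn
  rw [integral_add h1 h2]
  congr 1
  rw [setIntegral_indicator measurableSet_Iic, Ioi_inter_Iic]
  have h3 : ∫ y in Ioc (0:ℝ) (u ^ 2 / α ^ 2), (cdfOf g u - cdfOf g (φ y)) * gammaPDF p y
      = ∫ y in Ioc (0:ℝ) (u ^ 2 / α ^ 2),
          (cdfOf g u * gammaPDF p y - cdfOf g (φ y) * gammaPDF p y) := by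
    refine setIntegral_congr_fun measurableSet_Ioc fun y _ => by ring
  have h4 : IntegrableOn (fun y => cdfOf g u * gammaPDF p y) (Ioi 0) :=
    (gammaPDF_integrableOn hp).const_mul _
  rw [h3, integral_sub (h4.mono_set Ioc_subset_Ioi_self) (hφi.mono_set Ioc_subset_Ioi_self),
    integral_const_mul, setIntegral_gammaPDF]

lemma key {p α : ℝ} (hp : 0 < p) (hα : 0 < α) {g : ℝ → ℝ} (hg0 : ∀ x, 0 ≤ g x)
    (hgm : Measurable g) (hgi : Integrable g) (hg1 : (∫ x : ℝ, g x) = 1) (u : ℝ) :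
    ∫ w in Iic u, Tfun p α w * g w
      = (∫ y in Ioi (0:ℝ), cdfOf g (-(α * Real.sqrt y)) * gammaPDF p y)
        + Tfun p α u * cdfOf g u
        - ((if u < 0 then
              ∫ y in Ioc (0:ℝ) (u ^ 2 / α ^ 2),
                cdfOf g (-(α * Real.sqrt y)) * gammaPDF p y
            else 0)
          + (if 0 ≤ u then
              ∫ y in Ioc (0:ℝ) (u ^ 2 / α ^ 2),
                cdfOf g (α * Real.sqrt y) * gammaPDF p y
            else 0)) := by
  set S : Set (ℝ × ℝ) := {z : ℝ × ℝ | z.2 ≤ z.1 ^ 2 / α ^ 2} with hSdef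
  have hS : MeasurableSet S :=
    measurableSet_le measurable_snd ((measurable_fst.pow_const 2).div_const _)
  set F : ℝ × ℝ → ℝ := S.indicator (fun z => g z.1 * gammaPDF p z.2) with hFdef
  have hFm : Measurable F :=
    ((hgm.comp measurable_fst).mul (measurable_gammaPDF.comp measurable_snd)).indicator hS
  have hdom : Integrable (fun z : ℝ × ℝ => g z.1 * gammaPDF p z.2)
      ((volume.restrict (Iic u)).prod (volume.restrict (Ioi 0))) :=
    Integrable.mul_prod hgi.integrableOn (gammaPDF_integrableOn hp)
  have hFi : Integrable F ((volume.restrict (Iic u)).prod (volume.restrict (Ioi 0))) := by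
    refine hdom.abs.mono' hFm.aestronglyMeasurable (ae_of_all _ fun z => ?_)
    calc ‖F z‖ ≤ ‖g z.1 * gammaPDF p z.2‖ := norm_indicator_le_norm_self _ _
      _ = |g z.1 * gammaPDF p z.2| := Real.norm_eq_abs _
  have step1 : ∀ w : ℝ, (∫ y in Ioi (0:ℝ), F (w, y)) = Tfun p α w * g w := by
    intro w
    have h1 : ∀ y : ℝ, F (w, y)
        = (Iic (w ^ 2 / α ^ 2)).indicator (fun y => g w * gammaPDF p y) y := fun y => by
      simp only [hFdef, hSdef, Set.indicator_apply, mem_setOf_eq, mem_Iic]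
    simp only [h1]
    rw [setIntegral_indicator measurableSet_Iic, Ioi_inter_Iic, integral_const_mul,
      setIntegral_gammaPDF, mul_comm]
  have step2 : ∀ y ∈ Ioi (0:ℝ), (∫ w in Iic u, F (w, y))
      = (cdfOf g (min u (-(α * Real.sqrt y)))
          + (if α * Real.sqrt y ≤ u then cdfOf g u - cdfOf g (α * Real.sqrt y) else 0))
        * gammaPDF p y := by
    intro y hy
    rw [mem_Ioi] at hy
    have h1 : ∀ w : ℝ, F (w, y)
        = ({w : ℝ | y ≤ w ^ 2 / α ^ 2}).indicator (fun w => g w * gammaPDF p y) w := fun w => by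
      simp only [hFdef, hSdef, Set.indicator_apply, mem_setOf_eq]
    simp only [h1, sq_set_eq hα hy]
    rw [setIntegral_indicator (measurableSet_Iic.union measurableSet_Ici), integral_mul_const,
      inner_set_integral hgi (by positivity : 0 < α * Real.sqrt y)]
  have swap : ∫ w in Iic u, Tfun p α w * g w
      = ∫ y in Ioi (0:ℝ), (∫ w in Iic u, F (w, y)) := by
    rw [← integral_integral_swap (f := fun w y => F (w, y)) (by exact hFi)]
    exact (setIntegral_congr_fun measurableSet_Iic fun w _ => (step1 w).symm)
  rw [swap, setIntegral_congr_fun measurableSet_Ioi step2]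
  rcases le_or_gt 0 u with hu | hu
  · have hpw : ∀ y ∈ Ioi (0:ℝ),
        (cdfOf g (min u (-(α * Real.sqrt y)))
          + (if α * Real.sqrt y ≤ u then cdfOf g u - cdfOf g (α * Real.sqrt y) else 0))
          * gammaPDF p y
        = cdfOf g (-(α * Real.sqrt y)) * gammaPDF p y
          + (Iic (u ^ 2 / α ^ 2)).indicator
              (fun y => (cdfOf g u - cdfOf g (α * Real.sqrt y)) * gammaPDF p y) y := by
      intro y hy
      rw [mem_Ioi] at hy
      have hiff : α * Real.sqrt y ≤ u ↔ y ≤ u ^ 2 / α ^ 2 := sqrt_le_iff_le_sq hα hy hu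
      have hmin : min u (-(α * Real.sqrt y)) = -(α * Real.sqrt y) :=
        min_eq_right (by nlinarith [Real.sqrt_nonneg y])
      rw [hmin]
      simp only [Set.indicator_apply, mem_Iic]
      by_cases hyc : y ≤ u ^ 2 / α ^ 2
      · rw [if_pos hyc, if_pos (hiff.2 hyc)]; ring
      · rw [if_neg hyc, if_neg fun h => hyc (hiff.1 h)]; ring
    rw [setIntegral_congr_fun measurableSet_Ioi hpw,
      split_eval hp hα hg0 hgm hgi hg1 u _ ((Real.continuous_sqrt.measurable).const_mul α),
      if_neg (not_lt.2 hu), if_pos hu]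
    ring
  · have hpw : ∀ y ∈ Ioi (0:ℝ),
        (cdfOf g (min u (-(α * Real.sqrt y)))
          + (if α * Real.sqrt y ≤ u then cdfOf g u - cdfOf g (α * Real.sqrt y) else 0))
          * gammaPDF p y
        = cdfOf g (-(α * Real.sqrt y)) * gammaPDF p y
          + (Iic (u ^ 2 / α ^ 2)).indicator
              (fun y => (cdfOf g u - cdfOf g (-(α * Real.sqrt y))) * gammaPDF p y) y := by
      intro y hy
      rw [mem_Ioi] at hy
      have hiff : α * Real.sqrt y ≤ -u ↔ y ≤ u ^ 2 / α ^ 2 := by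
        have := sqrt_le_iff_le_sq hα hy (by linarith : (0:ℝ) ≤ -u)
        rwa [neg_sq] at this
      have hif : ¬ (α * Real.sqrt y ≤ u) := by nlinarith [Real.sqrt_nonneg y]
      rw [if_neg hif, add_zero]
      simp only [Set.indicator_apply, mem_Iic]
      by_cases hyc : y ≤ u ^ 2 / α ^ 2
      · rw [if_pos hyc, min_eq_left (by linarith [hiff.2 hyc])]
        ring
      · have h5 : -u < α * Real.sqrt y := lt_of_not_ge fun h => hyc (hiff.1 h)
        rw [if_neg hyc, min_eq_right (by linarith), add_zero]
    rw [setIntegral_congr_fun measurableSet_Ioi hpw,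
      split_eval hp hα hg0 hgm hgi hg1 u (fun y => -(α * Real.sqrt y)) ((Real.continuous_sqrt.measurable).const_mul α).neg,
      if_pos hu, if_neg (not_le.2 hu)]
    ring

lemma cov {σ : ℝ} (hσ : 0 < σ) (μ : ℝ) (h : ℝ → ℝ) (x : ℝ) :
    ∫ t in Iic x, h ((t - μ) / σ) = σ * ∫ w in Iic ((x - μ) / σ), h w := by
  set H : ℝ → ℝ := (Iic ((x - μ) / σ)).indicator h with hHdef
  have h1 : ∫ t in Iic x, h ((t - μ) / σ) = ∫ t : ℝ, H ((t - μ) / σ) := by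
    rw [← integral_indicator measurableSet_Iic]
    congr 1
    funext t
    simp only [hHdef, Set.indicator_apply]
    refine if_congr ?_ rfl rfl
    simp only [mem_Iic]
    rw [div_le_div_iff_of_pos_right hσ, sub_le_sub_iff_right]
  have h2 : ∫ t : ℝ, H ((t - μ) / σ) = ∫ t : ℝ, H (t / σ) :=
    integral_sub_right_eq_self (fun t => H (t / σ)) μ
  have h3 : ∫ t : ℝ, H (t / σ) = |σ| • ∫ w : ℝ, H w := MeasureTheory.Measure.integral_comp_div H σ
  rw [h1, h2, h3, abs_of_pos hσ, smul_eq_mul, hHdef, integral_indicator measurableSet_Iic]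

/-- closed formula for the CDF of the trimodal distribution. -/
theorem stmt1 (p μ σ α ρ δ : ℝ) (hp : 0 < p) (hσ : 0 < σ) (hα : 0 < α)
    (hρ : 0 ≤ ρ) (hδ : 0 ≤ δ) (hρδ : 0 < ρ + δ)
    (g : ℝ → ℝ) (hg0 : ∀ x, 0 ≤ g x) (hgm : Measurable g)
    (hgi : Integrable g) (hg1 : (∫ x : ℝ, g x) = 1) :
    ∀ x : ℝ,
      cdfOf (tdPDF p μ σ α ρ δ g) x
        = (ρ * σ / Znorm p σ α ρ δ g) * cdfOf g ((x - μ) / σ)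
          + (δ * σ / Znorm p σ α ρ δ g) *
              ((∫ y in Ioi (0:ℝ), cdfOf g (-α * Real.sqrt y) * gammaPDF p y)
                + Tfun p α ((x - μ) / σ) * cdfOf g ((x - μ) / σ))
          - (δ * σ / Znorm p σ α ρ δ g) *
              ((if x < μ then
                  ∫ y in (0:ℝ)..(((x - μ) / σ / α) ^ 2),
                    cdfOf g (-α * Real.sqrt y) * gammaPDF p y
                else 0)
                + (if μ ≤ x then
                    ∫ y in (0:ℝ)..(((x - μ) / σ / α) ^ 2),
                      cdfOf g (α * Real.sqrt y) * gammaPDF p y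
                  else 0)) := by
  intro x
  set u : ℝ := (x - μ) / σ with hu
  set Z : ℝ := Znorm p σ α ρ δ g with hZ
  have hTgi : IntegrableOn (fun w => Tfun p α w * g w) (Iic u) := by
    refine Integrable.mono' hgi.integrableOn
      (((measurable_Tfun hp (α := α)).mul hgm).aestronglyMeasurable) (ae_of_all _ fun w => ?_)
    rw [Real.norm_eq_abs, abs_mul, abs_of_nonneg (Tfun_nonneg hp w), abs_of_nonneg (hg0 w)]
    calc Tfun p α w * g w ≤ 1 * g w :=
          mul_le_mul_of_nonneg_right (Tfun_le_one hp w) (hg0 w)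
      _ = g w := one_mul _
  have hlhs : cdfOf (tdPDF p μ σ α ρ δ g) x
      = (1 / Z) * (σ * (ρ * cdfOf g u
          + δ * ∫ w in Iic u, Tfun p α w * g w)) := by
    have h0 : ∀ t : ℝ, tdPDF p μ σ α ρ δ g t
        = (1 / Z) * ((fun w => (ρ + δ * Tfun p α w) * g w) ((t - μ) / σ)) := fun t => by
      rw [tdPDF]; ring
    rw [cdfOf]
    simp_rw [h0]
    rw [integral_const_mul, cov hσ μ (fun w => (ρ + δ * Tfun p α w) * g w) x]
    congr 2
    have h1 : ∀ w, (ρ + δ * Tfun p α w) * g w = ρ * g w + δ * (Tfun p α w * g w) :=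
      fun w => by ring
    simp_rw [h1]
    rw [integral_add (hgi.integrableOn.const_mul ρ) (hTgi.const_mul δ),
      integral_const_mul, integral_const_mul, cdfOf]
  rw [hlhs, key hp hα hg0 hgm hgi hg1 u]
  have hxlt : (x < μ) = (u < 0) := by
    rw [hu, eq_iff_iff, div_lt_iff₀ hσ, zero_mul, sub_neg]
  have hxge : (μ ≤ x) = (0 ≤ u) := by
    rw [hu, eq_iff_iff, le_div_iff₀ hσ, zero_mul, sub_nonneg]
  have hc : (u / α) ^ 2 = u ^ 2 / α ^ 2 := div_pow _ _ _
  simp only [hxlt, hxge, hc, neg_mul,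
    intervalIntegral.integral_of_le (by positivity : (0:ℝ) ≤ u ^ 2 / α ^ 2)]
  simp only [div_eq_mul_inv]
  ring
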